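/- Let (X,d) be a metric space with a Borel regular doubling measure μ with constant C_d ≥ 1, let Ω ⊂ X be nonempty open with X∖Ω ≠ ∅, let λ ≥ 1, and let {B_k}_{k∈ℕ} with subordinate partition of unity {φ_k}_{k∈ℕ} be a Whitney covering of Ω with parameter λ and overlap constant C₀. Then there is a constant C depending only on C_d and C₀ such that for every u ∈ L¹_loc(Ω), every a ∈ ℝ, every z ∈ ∂Ω, and every r > 0, the discrete convolution u_W := Σ_k u_{B_k}·φ_k satisfies ∫_{B(z,r)∩Ω} |u_W − a| dμ ≤ C·∫_{B(z,2r)∩Ω} |u − a| dμ. -/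

import Mathlib

open Metric MeasureTheory

open Set
open scoped ENNReal

section AuxSep

variable {X : Type*} [MetricSpace X] [MeasurableSpace X] [BorelSpace X]
variable (μ : Measure X) (C_d : ℝ)

omit [BorelSpace X] in
lemma wc_doubling_pow
    (hd : ∀ (x : X) (r : ℝ), 0 < r →
      0 < μ (ball x r) ∧ μ (ball x (2 * r)) ≤ ENNReal.ofReal C_d * μ (ball x r) ∧
        μ (ball x r) < ⊤)
    (x : X) (s : ℝ) (hs : 0 < s) :
    ∀ k : ℕ, μ (ball x (2 ^ k * s)) ≤ (ENNReal.ofReal C_d) ^ k * μ (ball x s) := by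
  intro k
  induction k with
  | zero => simp
  | succ k ih =>
      have h2 : (0:ℝ) < 2 ^ k * s := by positivity
      have h3 : (2:ℝ) ^ (k+1) * s = 2 * (2 ^ k * s) := by ring
      rw [h3, pow_succ, mul_comm ((ENNReal.ofReal C_d) ^ k) _, mul_assoc]
      exact le_trans (hd x _ h2).2.1 (mul_le_mul_right ih _)

lemma wc_separated_finite (hCd : 1 ≤ C_d)
    (hd : ∀ (x : X) (r : ℝ), 0 < r →
      0 < μ (ball x r) ∧ μ (ball x (2 * r)) ≤ ENNReal.ofReal C_d * μ (ball x r) ∧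
        μ (ball x r) < ⊤)
    (x₀ : X) (R ε : ℝ) (hR : 0 ≤ R) (hε : 0 < ε)
    (M : Set X) (hM : M ⊆ ball x₀ R) (hsep : M.Pairwise fun p q => ε ≤ dist p q) :
    M.Finite := by
  by_contra hinf
  have hinf' : M.Infinite := hinf
  obtain ⟨k, hk⟩ := pow_unbounded_of_one_lt (y := (2:ℝ)) (2 * (R + ε) / (ε / 2)) one_lt_two
  have hk' : 2 * (R + ε) ≤ 2 ^ k * (ε / 2) := by
    rw [div_lt_iff₀ (by positivity)] at hk
    nlinarith
  have hRε : (0:ℝ) < R + ε := by linarith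
  set D := μ (ball x₀ (R + ε)) with hD
  have hD0 : 0 < D := (hd x₀ _ hRε).1
  have hDt : D < ⊤ := (hd x₀ _ hRε).2.2
  set c : ℝ≥0∞ := (ENNReal.ofReal C_d) ^ k with hc
  have hc0 : c ≠ 0 := by
    apply pow_ne_zero
    exact ne_of_gt (ENNReal.ofReal_pos.2 (by linarith))
  have hct : c ≠ ⊤ := by
    exact ENNReal.pow_ne_top ENNReal.ofReal_ne_top
  set δ : ℝ≥0∞ := D / c with hδ
  have hδ0 : δ ≠ 0 := ne_of_gt (ENNReal.div_pos (ne_of_gt hD0) hct)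
  have hδt : δ ≠ ⊤ := by
    rw [hδ]
    exact ne_of_lt (ENNReal.div_lt_top (ne_of_lt hDt) hc0)
  have hlow : ∀ y ∈ M, δ ≤ μ (ball y (ε / 2)) := by
    intro y hy
    have hsub : ball x₀ (R + ε) ⊆ ball y (2 ^ k * (ε / 2)) := by
      intro w hw
      have h1 : dist w y ≤ dist w x₀ + dist x₀ y := dist_triangle _ _ _
      have h2 : dist x₀ y < R := by rw [dist_comm]; exact hM hy
      have h3 : dist w x₀ < R + ε := hw
      have : dist w y < 2 * (R + ε) := by rw [mem_ball] at *; linarith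
      exact mem_ball.2 (lt_of_lt_of_le this hk')
    have h4 : D ≤ c * μ (ball y (ε / 2)) :=
      le_trans (measure_mono hsub) (wc_doubling_pow μ C_d hd y (ε/2) (by positivity) k)
    rw [hδ]
    exact ENNReal.div_le_iff_le_mul (Or.inl hc0) (Or.inl hct) |>.2 (by rwa [mul_comm] at h4)
  obtain ⟨n, hn⟩ := ENNReal.exists_nat_gt (ne_of_lt (ENNReal.div_lt_top (ne_of_lt hDt) hδ0))
  obtain ⟨t, htM, htcard⟩ := hinf'.exists_subset_card_eq n
  have hdisj : (t : Set X).PairwiseDisjoint (fun y => ball y (ε / 2)) := by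
    intro y hy y' hy' hne
    have hdd : ε ≤ dist y y' := hsep (htM hy) (htM hy') hne
    refine Set.disjoint_left.2 fun w hw hw' => ?_
    have : dist y y' < ε := by
      calc dist y y' ≤ dist y w + dist w y' := dist_triangle _ _ _
        _ < ε / 2 + ε / 2 := by
            rw [mem_ball] at hw hw'
            rw [dist_comm] at hw
            exact add_lt_add hw hw'
        _ = ε := by ring
    linarith
  have hcup : μ (⋃ y ∈ t, ball y (ε / 2)) = ∑ y ∈ t, μ (ball y (ε / 2)) :=
    measure_biUnion_finset hdisj (fun y _ => measurableSet_ball)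
  have hsubD : (⋃ y ∈ t, ball y (ε / 2)) ⊆ ball x₀ (R + ε) := by
    refine Set.iUnion₂_subset fun y hy => ?_
    intro w hw
    have h2 : dist y x₀ < R := hM (htM hy)
    rw [mem_ball] at hw ⊢
    calc dist w x₀ ≤ dist w y + dist y x₀ := dist_triangle _ _ _
      _ < ε / 2 + R := add_lt_add hw h2
      _ ≤ R + ε := by linarith
  have hlow2 : (n : ℝ≥0∞) * δ ≤ D := by
    calc (n : ℝ≥0∞) * δ = ∑ _y ∈ t, δ := by
          rw [Finset.sum_const, nsmul_eq_mul, htcard]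
      _ ≤ ∑ y ∈ t, μ (ball y (ε / 2)) := by
          refine Finset.sum_le_sum fun y hy => ?_
          exact hlow y (htM hy)
      _ = μ (⋃ y ∈ t, ball y (ε / 2)) := hcup.symm
      _ ≤ D := measure_mono hsubD
  have : D < (n : ℝ≥0∞) * δ := (ENNReal.div_lt_iff (Or.inl hδ0) (Or.inl hδt)).1 hn
  exact absurd hlow2 (not_le.2 this)

lemma wc_secondCountable (hCd : 1 ≤ C_d)
    (hd : ∀ (x : X) (r : ℝ), 0 < r →
      0 < μ (ball x r) ∧ μ (ball x (2 * r)) ≤ ENNReal.ofReal C_d * μ (ball x r) ∧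
        μ (ball x r) < ⊤) :
    SecondCountableTopology X := by
  rcases isEmpty_or_nonempty X with hX | hX
  · exact ⟨⟨∅, countable_empty, by simp [eq_iff_true_of_subsingleton]⟩⟩
  obtain ⟨x₀⟩ := hX
  refine Metric.secondCountable_of_almost_dense_set fun ε hε => ?_
  have key : ∀ n : ℕ, ∃ M : Set X, M.Finite ∧
      ∀ x ∈ ball x₀ (n : ℝ), ∃ y ∈ M, dist x y ≤ ε := by
    intro n
    set 𝒮 : Set (Set X) :=
      {A | A ⊆ ball x₀ (n : ℝ) ∧ A.Pairwise fun p q => ε ≤ dist p q} with h𝒮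
    have hchain : ∀ cc ⊆ 𝒮, IsChain (· ⊆ ·) cc → cc.Nonempty →
        ∃ ub ∈ 𝒮, ∀ s ∈ cc, s ⊆ ub := by
      intro cc hc𝒮 hchain hne
      refine ⟨⋃₀ cc, ⟨?_, ?_⟩, fun s hs => subset_sUnion_of_mem hs⟩
      · exact sUnion_subset fun A hA => (hc𝒮 hA).1
      · intro p hp q hq hpq
        obtain ⟨A, hA, hpA⟩ := hp
        obtain ⟨B, hB, hqB⟩ := hq
        rcases hchain.total hA hB with h | h
        · exact (hc𝒮 hB).2 (h hpA) hqB hpq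
        · exact (hc𝒮 hA).2 hpA (h hqB) hpq
    obtain ⟨M, -, hMmax⟩ := zorn_subset_nonempty 𝒮 hchain ∅
      ⟨empty_subset _, pairwise_empty _⟩
    refine ⟨M, ?_, ?_⟩
    · exact wc_separated_finite μ C_d hCd hd x₀ n ε (Nat.cast_nonneg n) hε M
        hMmax.1.1 hMmax.1.2
    · intro x hx
      by_contra hcon
      push_neg at hcon
      have hxM : x ∉ M := fun h => by
        have := hcon x h
        simp at this
        linarith
      have hins : insert x M ∈ 𝒮 := by
        constructor
        · exact insert_subset hx hMmax.1.1
        · rw [Set.pairwise_insert]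
          refine ⟨hMmax.1.2, fun y hy hne => ?_⟩
          have h1 : ε < dist x y := hcon y hy
          exact ⟨h1.le, by rw [dist_comm]; exact h1.le⟩
      have := hMmax.2 hins (subset_insert x M)
      exact hxM (this (mem_insert x M))
  choose M hMfin hMdense using key
  refine ⟨⋃ n, M n, countable_iUnion fun n => (hMfin n).countable, fun x => ?_⟩
  obtain ⟨n, hn⟩ := exists_nat_gt (dist x x₀)
  obtain ⟨y, hy, hxy⟩ := hMdense n x (mem_ball.2 hn)
  exact ⟨y, mem_iUnion.2 ⟨n, hy⟩, hxy⟩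

end AuxSep

/-- A Whitney covering of an open set `Ω` with parameter `lam`, overlap constant `C₀`
and partition-of-unity Lipschitz parameter `c`, together with a subordinate partition
of unity. -/
structure WhitneyCovering (X : Type*) [MetricSpace X] (Ω : Set X)
    (lam : ℝ) (C₀ : ℕ) (c : ℝ) where
  center : ℕ → X
  radius : ℕ → ℝ
  phi : ℕ → X → ℝ
  center_mem : ∀ j, center j ∈ Ω
  radius_eq : ∀ j, radius j = infDist (center j) Ωᶜ / (100 * lam)
  covers : Ω = ⋃ j, ball (center j) (radius j)
  overlap : ∀ k, {j | (ball (center k) (20 * lam * radius k) ∩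
      ball (center j) (20 * lam * radius j)).Nonempty}.encard ≤ (C₀ : ℕ∞)
  radius_le : ∀ k j, (ball (center k) (20 * lam * radius k) ∩
      ball (center j) (20 * lam * radius j)).Nonempty → radius j ≤ 2 * radius k
  phi_nonneg : ∀ j p, 0 ≤ phi j p
  phi_le_one : ∀ j p, phi j p ≤ 1
  phi_lip : ∀ j p q, |phi j p - phi j q| ≤ (c / radius j) * dist p q
  phi_supp : ∀ j, Function.support (phi j) ⊆ ball (center j) (2 * radius j)
  phi_sum : ∀ p ∈ Ω, ∑' j, phi j p = 1

/-- The discrete convolution `u_W = Σ_j u_{B_j} φ_j` of `u` with respect to a Whitney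
covering. -/
noncomputable def discreteConv {X : Type*} [MetricSpace X] [MeasurableSpace X]
    (μ : Measure X) {Ω : Set X} {lam : ℝ} {C₀ : ℕ} {c : ℝ}
    (W : WhitneyCovering X Ω lam C₀ c) (u : X → ℝ) : X → ℝ :=
  fun p => ∑' j, (⨍ y in ball (W.center j) (W.radius j), u y ∂μ) * W.phi j p

section WC

variable {X : Type*} [MetricSpace X] {Ω : Set X} {lam : ℝ} {C₀ : ℕ} {c : ℝ}

lemma wc_infDist_pos (hΩ : IsOpen Ω) (hΩc : Ωᶜ.Nonempty)
    (W : WhitneyCovering X Ω lam C₀ c) (j : ℕ) :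
    0 < infDist (W.center j) Ωᶜ := by
  have h1 : W.center j ∉ Ωᶜ := fun h => h (W.center_mem j)
  exact ((isClosed_compl_iff.2 hΩ).notMem_iff_infDist_pos hΩc).1 h1

lemma wc_radius_pos (hΩ : IsOpen Ω) (hΩc : Ωᶜ.Nonempty) (hlam : 1 ≤ lam)
    (W : WhitneyCovering X Ω lam C₀ c) (j : ℕ) : 0 < W.radius j := by
  rw [W.radius_eq]
  exact div_pos (wc_infDist_pos hΩ hΩc W j) (by nlinarith)

lemma wc_radius_le (hlam : 1 ≤ lam) (W : WhitneyCovering X Ω lam C₀ c) (j : ℕ) :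
    W.radius j ≤ infDist (W.center j) Ωᶜ / 100 := by
  rw [W.radius_eq]
  have h1 : (0:ℝ) ≤ infDist (W.center j) Ωᶜ := infDist_nonneg
  have h2 : (100:ℝ) ≤ 100 * lam := by nlinarith
  exact div_le_div_of_nonneg_left h1 (by norm_num) h2

lemma wc_mem_Omega (W : WhitneyCovering X Ω lam C₀ c) (j : ℕ) {y : X}
    (hy : dist y (W.center j) < infDist (W.center j) Ωᶜ) : y ∈ Ω := by
  by_contra h
  have := infDist_le_dist_of_mem (s := Ωᶜ) (x := W.center j) (y := y) h
  rw [dist_comm] at this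
  exact absurd (lt_of_le_of_lt this hy) (lt_irrefl _)

/-- bounded overlap at a point, for the doubled balls -/
lemma wc_encard_le (hΩ : IsOpen Ω) (hΩc : Ωᶜ.Nonempty) (hlam : 1 ≤ lam)
    (W : WhitneyCovering X Ω lam C₀ c) (p : X) :
    {j | p ∈ ball (W.center j) (2 * W.radius j)}.encard ≤ (C₀ : ℕ∞) := by
  set A := {j | p ∈ ball (W.center j) (2 * W.radius j)} with hA
  rcases A.eq_empty_or_nonempty with h | ⟨j₀, hj₀⟩
  · simp [h]
  have hsub2 : ∀ j, ball (W.center j) (2 * W.radius j) ⊆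
      ball (W.center j) (20 * lam * W.radius j) := by
    intro j
    apply ball_subset_ball
    have := (wc_radius_pos hΩ hΩc hlam W j).le
    nlinarith
  have hAsub : A ⊆ {j | (ball (W.center j₀) (20 * lam * W.radius j₀) ∩
      ball (W.center j) (20 * lam * W.radius j)).Nonempty} := by
    intro j hj
    exact ⟨p, hsub2 j₀ hj₀, hsub2 j hj⟩
  exact le_trans (Set.encard_mono hAsub) (W.overlap j₀)

end WC

/-- There is a constant `C`, depending only on `C_d` and `C₀`, such
that for every `u ∈ L¹_loc(Ω)`, `a ∈ ℝ`, `z ∈ ∂Ω` and `r > 0`, the discrete convolution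
`u_W` satisfies `∫_{B(z,r)∩Ω} |u_W − a| dμ ≤ C ∫_{B(z,2r)∩Ω} |u − a| dμ`. -/
theorem discreteConv_boundary_estimate (C_d : ℝ) (hCd : 1 ≤ C_d) (C₀ : ℕ) :
    ∃ C > (0 : ℝ), ∀ (X : Type) [MetricSpace X] [MeasurableSpace X] [BorelSpace X]
      (μ : Measure X),
      (∀ (x : X) (r : ℝ), 0 < r →
        0 < μ (ball x r) ∧ μ (ball x (2 * r)) ≤ ENNReal.ofReal C_d * μ (ball x r) ∧
          μ (ball x r) < ⊤) →
      ∀ (Ω : Set X), IsOpen Ω → Ω.Nonempty → Ωᶜ.Nonempty →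
      ∀ (lam c : ℝ), 1 ≤ lam → 0 < c →
      ∀ (W : WhitneyCovering X Ω lam C₀ c),
      ∀ u : X → ℝ, LocallyIntegrableOn u Ω μ →
      ∀ (a : ℝ) (z : X), z ∈ frontier Ω → ∀ r : ℝ, 0 < r →
        ∫⁻ p in ball z r ∩ Ω, ENNReal.ofReal |discreteConv μ W u p - a| ∂μ ≤
          ENNReal.ofReal C *
            ∫⁻ p in ball z (2 * r) ∩ Ω, ENNReal.ofReal |u p - a| ∂μ := by
  classical
  refine ⟨C_d * (C₀ + 1), by positivity, ?_⟩
  intro X _ _ _ μ hd Ω hΩ hΩne hΩc lam c hlam hc W u hu a z hz r hr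

  -- notation
  set B : ℕ → Set X := fun j => ball (W.center j) (W.radius j) with hB
  set B2 : ℕ → Set X := fun j => ball (W.center j) (2 * W.radius j) with hB2
  set f : X → ℝ≥0∞ := fun p => ENNReal.ofReal |u p - a| with hf
  set S : Set X := ball z r ∩ Ω with hS
  set T : Set X := ball z (2 * r) ∩ Ω with hT
  have hSmeas : MeasurableSet S := (isOpen_ball.inter hΩ).measurableSet
  have hrpos : ∀ j, 0 < W.radius j := wc_radius_pos hΩ hΩc hlam W
  have hzc : z ∈ Ωᶜ := by
    intro hzΩ
    rw [frontier, hΩ.interior_eq] at hz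
    exact hz.2 hzΩ
  -- membership finiteness at each point
  have hAfin : ∀ p : X, {j | p ∈ B2 j}.Finite := by
    intro p
    have h := wc_encard_le hΩ hΩc hlam W p
    have := lt_of_le_of_lt h (WithTop.coe_lt_top C₀)
    exact Set.encard_lt_top_iff.1 this
  have hAcard : ∀ p : X, ((hAfin p).toFinset.card : ℝ≥0∞) ≤ (C₀ : ℝ≥0∞) := by
    intro p
    have h := wc_encard_le hΩ hΩc hlam W p
    rw [(hAfin p).encard_eq_coe_toFinset_card] at h
    have h2 : (hAfin p).toFinset.card ≤ C₀ := by exact_mod_cast h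
    exact_mod_cast Nat.cast_le.2 h2
  -- averages and summand functions
  set avg : ℕ → ℝ := fun j => ⨍ y in B j, u y ∂μ with havg
  set g : ℕ → X → ℝ≥0∞ :=
    fun j p => ENNReal.ofReal |avg j - a| * ENNReal.ofReal (W.phi j p) with hg
  have hφmeas : ∀ j, Measurable (W.phi j) := by
    intro j
    have : LipschitzWith (Real.toNNReal (c / W.radius j)) (W.phi j) := by
      apply LipschitzWith.of_dist_le'
      intro p q
      rw [Real.dist_eq]
      exact W.phi_lip j p q
    exact this.continuous.measurable
  have hgmeas : ∀ j, Measurable (g j) := fun j =>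
    measurable_const.mul (ENNReal.measurable_ofReal.comp (hφmeas j))
  -- Step A: pointwise bound on S
  have hptwise : ∀ p ∈ S, ENNReal.ofReal |discreteConv μ W u p - a| ≤ ∑' j, g j p := by
    intro p hp
    have hpΩ : p ∈ Ω := hp.2
    set sp := (hAfin p).toFinset with hsp
    have hzero : ∀ j ∉ sp, W.phi j p = 0 := by
      intro j hj
      by_contra h
      exact hj ((hAfin p).mem_toFinset.2 (W.phi_supp j (Function.mem_support.2 h)))
    have hsum1 : ∑ j ∈ sp, W.phi j p = 1 := by
      rw [← tsum_eq_sum (L := SummationFilter.unconditional ℕ) hzero]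
      exact W.phi_sum p hpΩ
    have hconv : discreteConv μ W u p = ∑ j ∈ sp, avg j * W.phi j p :=
      tsum_eq_sum (fun j hj => by rw [hzero j hj, mul_zero])
    have hkey : discreteConv μ W u p - a = ∑ j ∈ sp, (avg j - a) * W.phi j p := by
      rw [hconv]
      have : ∑ j ∈ sp, (avg j - a) * W.phi j p
          = ∑ j ∈ sp, avg j * W.phi j p - a * ∑ j ∈ sp, W.phi j p := by
        rw [Finset.mul_sum, ← Finset.sum_sub_distrib]
        exact Finset.sum_congr rfl fun j _ => by ring
      rw [this, hsum1, mul_one]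
    calc ENNReal.ofReal |discreteConv μ W u p - a|
        ≤ ENNReal.ofReal (∑ j ∈ sp, |avg j - a| * W.phi j p) := by
          apply ENNReal.ofReal_le_ofReal
          rw [hkey]
          refine le_trans (Finset.abs_sum_le_sum_abs _ _) ?_
          refine le_of_eq (Finset.sum_congr rfl fun j _ => ?_)
          rw [abs_mul, abs_of_nonneg (W.phi_nonneg j p)]
      _ = ∑ j ∈ sp, ENNReal.ofReal (|avg j - a| * W.phi j p) :=
          ENNReal.ofReal_sum_of_nonneg fun j _ =>
            mul_nonneg (abs_nonneg _) (W.phi_nonneg j p)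
      _ = ∑ j ∈ sp, g j p := Finset.sum_congr rfl fun j _ =>
          ENNReal.ofReal_mul (abs_nonneg _)
      _ ≤ ∑' j, g j p := ENNReal.sum_le_tsum sp
  -- Step B
  have hstepB : ∫⁻ p in S, ENNReal.ofReal |discreteConv μ W u p - a| ∂μ
      ≤ ∑' j, ∫⁻ p in S, g j p ∂μ := by
    refine le_trans (setLIntegral_mono' hSmeas hptwise) ?_
    rw [lintegral_tsum fun j => (hgmeas j).aemeasurable]
  -- the main dichotomy
  by_cases hTtop : ∫⁻ p in T, f p ∂μ = ⊤
  · rw [hTtop, ENNReal.mul_top]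
    · exact le_top
    · simp only [ne_eq, ENNReal.ofReal_eq_zero, not_le]
      positivity
  -- now the finite case
  have : SecondCountableTopology X := wc_secondCountable μ C_d hCd hd
  have hum : AEStronglyMeasurable u (μ.restrict Ω) := hu.aestronglyMeasurable
  -- relevance predicate
  set Rel : ℕ → Prop := fun j => (B2 j ∩ ball z r).Nonempty with hRel
  -- geometry: relevant Whitney balls sit inside T
  have hgeom : ∀ j, Rel j → B j ⊆ T := by
    intro j ⟨q, hq1, hq2⟩
    have hdq : dist q (W.center j) < 2 * W.radius j := hq1
    have hdqz : dist q z < r := hq2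
    have hinf : infDist (W.center j) Ωᶜ ≤ dist (W.center j) z :=
      infDist_le_dist_of_mem hzc
    have hrle : W.radius j ≤ dist (W.center j) z / 100 :=
      le_trans (wc_radius_le hlam W j) (by linarith)
    have hcz : dist (W.center j) z < (50 / 49 : ℝ) * r := by
      have h1 : dist (W.center j) z ≤ dist (W.center j) q + dist q z :=
        dist_triangle _ _ _
      have h2 : dist (W.center j) q < 2 * W.radius j := by rwa [dist_comm]
      nlinarith
    intro y hy
    have hyc : dist y (W.center j) < W.radius j := hy
    constructor
    · have h3 : dist y z ≤ dist y (W.center j) + dist (W.center j) z :=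
        dist_triangle _ _ _
      have : dist y z < 2 * r := by nlinarith
      exact this
    · refine wc_mem_Omega W j ?_
      have h4 := wc_radius_le hlam W j
      have h5 := wc_infDist_pos hΩ hΩc W j
      nlinarith
  -- key estimate : average times measure is dominated by the integral over B j
  have hkeyavg : ∀ j, Rel j →
      ENNReal.ofReal |avg j - a| * μ (B j) ≤ ∫⁻ p in B j, f p ∂μ := by
    intro j hRelj
    have hBT : B j ⊆ T := hgeom j hRelj
    have hBΩ : B j ⊆ Ω := fun y hy => hBT hy |>.2
    have hμ0 : 0 < μ (B j) := (hd _ _ (hrpos j)).1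
    have hμt : μ (B j) < ⊤ := (hd _ _ (hrpos j)).2.2
    have hfint : ∫⁻ p in B j, f p ∂μ ≠ ⊤ :=
      ne_of_lt (lt_of_le_of_lt (lintegral_mono_set hBT) (lt_top_iff_ne_top.2 hTtop))
    have haesm : AEStronglyMeasurable u (μ.restrict (B j)) :=
      hum.mono_measure (Measure.restrict_mono hBΩ le_rfl)
    set v : X → ℝ := fun p => u p - a with hv
    have hvaesm : AEStronglyMeasurable v (μ.restrict (B j)) :=
      haesm.sub aestronglyMeasurable_const
    have hvint : IntegrableOn v (B j) μ := by
      refine ⟨hvaesm, ?_⟩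
      rw [HasFiniteIntegral]
      have heq : ∀ p, (‖v p‖₊ : ℝ≥0∞) = f p := fun p => by
        rw [hf, hv]; exact Real.enorm_eq_ofReal_abs _
      calc ∫⁻ p, (‖v p‖₊ : ℝ≥0∞) ∂(μ.restrict (B j))
          = ∫⁻ p in B j, f p ∂μ := by
            refine lintegral_congr fun p => heq p
        _ < ⊤ := lt_top_iff_ne_top.2 hfint
    have huint : IntegrableOn u (B j) μ := by
      have h1 : IntegrableOn (fun p => v p + a) (B j) μ :=
        hvint.add (integrableOn_const hμt.ne)
      have : (fun p => v p + a) = u := by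
        funext p; rw [hv]; ring
      rwa [this] at h1
    have htR : (0:ℝ) < (μ (B j)).toReal :=
      ENNReal.toReal_pos (ne_of_gt hμ0) (ne_of_lt hμt)
    have havgsub : avg j - a = ⨍ y in B j, v y ∂μ := by
      rw [havg, hv]
      simp only
      rw [setAverage_eq, setAverage_eq,
        integral_sub huint (integrableOn_const hμt.ne), setIntegral_const]
      simp only [smul_eq_mul]
      field_simp [show μ.real (B j) ≠ 0 from htR.ne']
    have habs : |⨍ y in B j, v y ∂μ| * (μ (B j)).toReal ≤ ∫ y in B j, |v y| ∂μ := by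
      rw [setAverage_eq, smul_eq_mul, abs_mul, abs_inv,
        abs_of_nonneg measureReal_nonneg]
      have h6 : |∫ y in B j, v y ∂μ| ≤ ∫ y in B j, |v y| ∂μ := by
        simpa [Real.norm_eq_abs] using
          norm_integral_le_integral_norm (μ := μ.restrict (B j)) v
      calc ((μ (B j)).toReal)⁻¹ * |∫ y in B j, v y ∂μ| * (μ (B j)).toReal
          = |∫ y in B j, v y ∂μ| := by field_simp
        _ ≤ ∫ y in B j, |v y| ∂μ := h6
    have hlin : ENNReal.ofReal (∫ y in B j, |v y| ∂μ) = ∫⁻ p in B j, f p ∂μ := by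
      rw [ofReal_integral_eq_lintegral_ofReal hvint.abs
        (Filter.Eventually.of_forall fun y => abs_nonneg _)]
    calc ENNReal.ofReal |avg j - a| * μ (B j)
        = ENNReal.ofReal |avg j - a| * ENNReal.ofReal ((μ (B j)).toReal) := by
          rw [ENNReal.ofReal_toReal (ne_of_lt hμt)]
      _ = ENNReal.ofReal (|avg j - a| * (μ (B j)).toReal) :=
          (ENNReal.ofReal_mul (abs_nonneg _)).symm
      _ ≤ ENNReal.ofReal (∫ y in B j, |v y| ∂μ) := by
          apply ENNReal.ofReal_le_ofReal
          rw [havgsub]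
          exact habs
      _ = ∫⁻ p in B j, f p ∂μ := hlin
  -- per-index bound
  set w : ℕ → ℝ≥0∞ := fun j => if Rel j then ∫⁻ p in B j, f p ∂μ else 0 with hw
  have hperj : ∀ j, ∫⁻ p in S, g j p ∂μ ≤ ENNReal.ofReal C_d * w j := by
    intro j
    by_cases hRelj : Rel j
    · have h1 : ∫⁻ p in S, g j p ∂μ
          = ENNReal.ofReal |avg j - a| * ∫⁻ p in S, ENNReal.ofReal (W.phi j p) ∂μ := by
        rw [hg]
        exact lintegral_const_mul _ (ENNReal.measurable_ofReal.comp (hφmeas j))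
      have h2 : ∫⁻ p in S, ENNReal.ofReal (W.phi j p) ∂μ ≤ μ (B2 j) := by
        refine le_trans (setLIntegral_le_lintegral _ _) ?_
        have h3 : ∀ p, ENNReal.ofReal (W.phi j p) ≤ (B2 j).indicator (fun _ => 1) p := by
          intro p
          by_cases hp : p ∈ B2 j
          · rw [Set.indicator_of_mem hp]
            exact ENNReal.ofReal_le_one.2 (W.phi_le_one j p)
          · rw [Set.indicator_of_notMem hp]
            have : W.phi j p = 0 := by
              by_contra h
              exact hp (W.phi_supp j (Function.mem_support.2 h))
            rw [this]
            simp
        refine le_trans (lintegral_mono h3) ?_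
        rw [lintegral_indicator measurableSet_ball, setLIntegral_one]
      have h4 : μ (B2 j) ≤ ENNReal.ofReal C_d * μ (B j) := (hd _ _ (hrpos j)).2.1
      calc ∫⁻ p in S, g j p ∂μ
          ≤ ENNReal.ofReal |avg j - a| * (ENNReal.ofReal C_d * μ (B j)) := by
            rw [h1]
            exact mul_le_mul_right (le_trans h2 h4) _
        _ = ENNReal.ofReal C_d * (ENNReal.ofReal |avg j - a| * μ (B j)) := by ring
        _ ≤ ENNReal.ofReal C_d * ∫⁻ p in B j, f p ∂μ :=
            mul_le_mul_right (hkeyavg j hRelj) _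
        _ = ENNReal.ofReal C_d * w j := by rw [hw]; simp [hRelj]
    · have h1 : ∀ p ∈ S, g j p = 0 := by
        intro p hp
        have hφ0 : W.phi j p = 0 := by
          by_contra h
          exact hRelj ⟨p, W.phi_supp j (Function.mem_support.2 h), hp.1⟩
        rw [hg]
        simp [hφ0]
      have : ∫⁻ p in S, g j p ∂μ ≤ 0 := by
        refine le_trans (setLIntegral_mono' hSmeas fun p hp => le_of_eq (h1 p hp)) ?_
        simp
      exact le_trans this zero_le
  -- Step D : summing the w j
  have hstepD : ∑' j, w j ≤ (C₀ : ℝ≥0∞) * ∫⁻ p in T, f p ∂μ := by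
    have hfae : AEMeasurable f (μ.restrict T) := by
      have hTΩ : T ⊆ Ω := fun y hy => hy.2
      have hvsm : AEStronglyMeasurable (fun p => u p - a) (μ.restrict T) :=
        (hum.mono_measure (Measure.restrict_mono hTΩ le_rfl)).sub aestronglyMeasurable_const
      have habs : AEMeasurable (fun p => |u p - a|) (μ.restrict T) := by
        simpa [Real.norm_eq_abs] using hvsm.norm.aemeasurable
      exact ENNReal.measurable_ofReal.comp_aemeasurable habs
    set h : ℕ → X → ℝ≥0∞ :=
      fun j => if Rel j then (B j).indicator f else (fun _ => 0) with hh
    have hwh : ∀ j, w j = ∫⁻ p in T, h j p ∂μ := by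
      intro j
      rw [hw, hh]
      by_cases hRelj : Rel j
      · simp only [hRelj, if_true]
        rw [lintegral_indicator measurableSet_ball, Measure.restrict_restrict measurableSet_ball,
          Set.inter_eq_self_of_subset_left (hgeom j hRelj)]
      · simp [hRelj]
    have hhae : ∀ j, AEMeasurable (h j) (μ.restrict T) := by
      intro j
      rw [hh]
      by_cases hRelj : Rel j
      · simp only [hRelj, if_true]
        exact hfae.indicator measurableSet_ball
      · simp only [hRelj, if_false]
        exact aemeasurable_const
    have hpt : ∀ p, ∑' j, h j p ≤ (C₀ : ℝ≥0∞) * f p := by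
      intro p
      have hzero : ∀ j ∉ (hAfin p).toFinset, h j p = 0 := by
        intro j hj
        rw [hh]
        by_cases hRelj : Rel j
        · simp only [hRelj, if_true]
          refine Set.indicator_of_notMem (fun hmem => hj ?_) _
          refine (hAfin p).mem_toFinset.2 ?_
          exact ball_subset_ball (by linarith [(hrpos j).le]) hmem
        · simp [hRelj]
      rw [tsum_eq_sum hzero]
      calc ∑ j ∈ (hAfin p).toFinset, h j p
          ≤ ∑ _j ∈ (hAfin p).toFinset, f p := by
            refine Finset.sum_le_sum fun j _ => ?_
            rw [hh]
            by_cases hRelj : Rel j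
            · simp only [hRelj, if_true]
              exact Set.indicator_le_self' (fun _ _ => zero_le) p
            · simp [hRelj]
        _ = ((hAfin p).toFinset.card : ℝ≥0∞) * f p := by
            rw [Finset.sum_const, nsmul_eq_mul]
        _ ≤ (C₀ : ℝ≥0∞) * f p := mul_le_mul_left (hAcard p) _
    calc ∑' j, w j = ∑' j, ∫⁻ p in T, h j p ∂μ := by
          exact tsum_congr hwh
      _ = ∫⁻ p in T, (∑' j, h j p) ∂μ := (lintegral_tsum hhae).symm
      _ ≤ ∫⁻ p in T, (C₀ : ℝ≥0∞) * f p ∂μ := lintegral_mono fun p => hpt p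
      _ = (C₀ : ℝ≥0∞) * ∫⁻ p in T, f p ∂μ :=
          lintegral_const_mul' _ _ (ENNReal.natCast_ne_top C₀)
  -- put everything together
  calc ∫⁻ p in S, ENNReal.ofReal |discreteConv μ W u p - a| ∂μ
      ≤ ∑' j, ∫⁻ p in S, g j p ∂μ := hstepB
    _ ≤ ∑' j, ENNReal.ofReal C_d * w j := ENNReal.tsum_le_tsum hperj
    _ = ENNReal.ofReal C_d * ∑' j, w j := ENNReal.tsum_mul_left
    _ ≤ ENNReal.ofReal C_d * ((C₀ : ℝ≥0∞) * ∫⁻ p in T, f p ∂μ) :=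
        mul_le_mul_right hstepD _
    _ ≤ ENNReal.ofReal (C_d * (C₀ + 1)) * ∫⁻ p in T, f p ∂μ := by
        rw [← mul_assoc]
        refine mul_le_mul_left ?_ _
        rw [← ENNReal.ofReal_natCast C₀, ← ENNReal.ofReal_mul (by linarith)]
        apply ENNReal.ofReal_le_ofReal
        nlinarith [Nat.cast_nonneg (α := ℝ) C₀]
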